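/- Let G be a simple graph on n vertices and let h, k be integers with 1 ≤ h < k ≤ n/2. Then the characteristic polynomial of the Laplacian matrix L(F_h(G)) divides the characteristic polynomial of the Laplacian matrix L(F_k(G)); that is, the Laplacian spectrum of F_h(G), with multiplicities, is contained in the Laplacian spectrum of F_k(G). -/

import Mathlib

open Finset Polynomial Real Matrix

noncomputable section

/-- The `k`-token graph of a simple graph `G`. -/
def tokenGraph {V : Type*} [DecidableEq V] (G : SimpleGraph V) (k : ℕ) :
    SimpleGraph {s : Finset V // s.card = k} where
  Adj A B := ∃ a b, G.Adj a b ∧ a ∈ A.1 ∧ b ∈ B.1 ∧ symmDiff A.1 B.1 = {a, b}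
  symm := by
    constructor
    rintro A B ⟨a, b, hab, ha, hb, hd⟩
    exact ⟨b, a, hab.symm, hb, ha, by rw [symmDiff_comm, hd, Finset.pair_comm]⟩
  loopless := by
    constructor
    rintro A ⟨a, b, hab, ha, hb, hd⟩
    rw [symmDiff_self, Finset.bot_eq_empty] at hd
    exact (Finset.insert_ne_empty a {b}) hd.symm

/-- The Laplacian matrix (over ℝ) of a finite simple graph. -/
def lapMat {V : Type*} [Fintype V] [DecidableEq V] (G : SimpleGraph V) : Matrix V V ℝ :=
  letI := Classical.decRel G.Adj
  G.lapMatrix ℝ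

/-- The Laplacian matrix (over ℂ) of a finite simple graph. -/
def lapMatC {V : Type*} [Fintype V] [DecidableEq V] (G : SimpleGraph V) : Matrix V V ℂ :=
  letI := Classical.decRel G.Adj
  G.lapMatrix ℂ

/-- The Laplacian eigenvalues of `G`, with multiplicity, in nondecreasing order. -/
def lapSpec {V : Type*} [Fintype V] [DecidableEq V] (G : SimpleGraph V) : List ℝ :=
  ((lapMat G).charpoly.roots).sort (· ≤ ·)

/-- The algebraic connectivity: the second-smallest Laplacian eigenvalue. -/
def algConn {V : Type*} [Fintype V] [DecidableEq V] (G : SimpleGraph V) : ℝ :=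
  (lapSpec G).getD 1 0

/-- The largest Laplacian eigenvalue (Laplacian spectral radius). -/
def lapSpecRadius {V : Type*} [Fintype V] [DecidableEq V] (G : SimpleGraph V) : ℝ :=
  (lapSpec G).getLastD 0

/-- `μ` is an eigenvalue of the Laplacian matrix of `G`. -/
def IsLapEigen {V : Type*} [Fintype V] [DecidableEq V] (G : SimpleGraph V) (μ : ℝ) : Prop :=
  ∃ v : V → ℝ, v ≠ 0 ∧ (lapMat G).mulVec v = μ • v

/-- The induced subgraph of `G` on the complement of the vertex `i` (i.e. `G ∖ i`). -/
def deleteVert {V : Type*} (G : SimpleGraph V) (i : V) : SimpleGraph {v : V // v ≠ i} :=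
  SimpleGraph.comap Subtype.val G

/-- The cycle graph on `ℤ/nℤ`, where `i` is adjacent to `i ± 1`. -/
def cycleG (n : ℕ) : SimpleGraph (ZMod n) where
  Adj x y := x ≠ y ∧ (x - y = 1 ∨ y - x = 1)
  symm := by constructor; rintro x y ⟨hxy, h⟩; exact ⟨hxy.symm, h.symm⟩
  loopless := by constructor; rintro x ⟨hx, _⟩; exact hx rfl

/-- The inclusion matrix from `h`-subsets to `k`-subsets: rows indexed by `k`-subsets `A`,
columns by `h`-subsets `X`, with entry `1` if `X ⊆ A` and `0` otherwise. -/
def inclMatrix (V : Type*) [Fintype V] [DecidableEq V] (h k : ℕ) :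
    Matrix {s : Finset V // s.card = k} {s : Finset V // s.card = h} ℝ :=
  fun A X => if X.1 ⊆ A.1 then 1 else 0

/-- The `(n;k)`-binomial matrix: rows indexed by `k`-subsets `A`, columns by vertices `j`,
with entry `1` if `j ∈ A` and `0` otherwise. -/
def binomMatrix (V : Type*) [Fintype V] [DecidableEq V] (k : ℕ) :
    Matrix {s : Finset V // s.card = k} V ℝ :=
  fun A j => if j ∈ A.1 then 1 else 0

/-- The Kneser graph `K(n,k)`. -/
def kneserGraph (n k : ℕ) : SimpleGraph {s : Finset (Fin n) // s.card = k} where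
  Adj A B := A ≠ B ∧ Disjoint A.1 B.1
  symm := by constructor; rintro A B ⟨h1, h2⟩; exact ⟨h1.symm, h2.symm⟩
  loopless := by constructor; rintro A ⟨h1, _⟩; exact h1 rfl

end


noncomputable section AuxTokenLap


lemma charpoly_restrict_dvd {K V : Type*} [Field K] [AddCommGroup V] [Module K V]
    [FiniteDimensional K V] (f : V →ₗ[K] V) (W : Submodule K V)
    (hW : ∀ x ∈ W, f x ∈ W) :
    (f.restrict hW).charpoly ∣ f.charpoly := by
  obtain ⟨W', hcompl⟩ := Submodule.exists_isCompl W
  let e := Submodule.prodEquivOfIsCompl W W' hcompl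
  let bW := Module.finBasis K W
  let bW' := Module.finBasis K W'
  let b : Module.Basis _ K V := (bW.prod bW').map e
  have hrepr_inl : ∀ (w : W) i, b.repr (w : V) (Sum.inl i) = bW.repr w i := by
    intro w i
    have : e.symm (w : V) = (w, 0) := Submodule.prodEquivOfIsCompl_symm_apply_left (p := W) (q := W') hcompl w
    simp [b, Module.Basis.map_repr, this, Module.Basis.prod_repr_inl]
  have hrepr_inr : ∀ (w : W) i, b.repr (w : V) (Sum.inr i) = 0 := by
    intro w i
    have : e.symm (w : V) = (w, 0) := Submodule.prodEquivOfIsCompl_symm_apply_left (p := W) (q := W') hcompl w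
    simp [b, Module.Basis.map_repr, this, Module.Basis.prod_repr_inr]
  have hb_inl : ∀ i, b (Sum.inl i) = (bW i : V) := by
    intro i
    have : (bW.prod bW') (Sum.inl i) = (bW i, 0) := by
      rw [Module.Basis.prod_apply]; rfl
    simp [b, Module.Basis.map_apply, this, e, Submodule.coe_prodEquivOfIsCompl']
  set P := LinearMap.toMatrix b b f with hP
  have h21 : P.toBlocks₂₁ = 0 := by
    ext i j
    simp only [Matrix.toBlocks₂₁, Matrix.of_apply, hP, LinearMap.toMatrix_apply, Matrix.zero_apply]
    rw [hb_inl]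
    exact hrepr_inr ⟨f (bW j), hW _ (bW j).2⟩ i
  have h11 : P.toBlocks₁₁ = LinearMap.toMatrix bW bW (f.restrict hW) := by
    ext i j
    simp only [Matrix.toBlocks₁₁, Matrix.of_apply, hP, LinearMap.toMatrix_apply]
    rw [hb_inl]
    exact hrepr_inl ⟨f (bW j), hW _ (bW j).2⟩ i
  have hchar : f.charpoly = P.charpoly := (LinearMap.charpoly_toMatrix f b).symm
  rw [hchar, ← Matrix.fromBlocks_toBlocks P, h21, h11,
    Matrix.charpoly_fromBlocks_zero₂₁, LinearMap.charpoly_toMatrix]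
  exact Dvd.intro _ rfl

lemma charpoly_eq_charpoly_mulVecLin {K : Type*} [Field K] {q : Type*} [Fintype q]
    [DecidableEq q] (A : Matrix q q K) : A.charpoly = LinearMap.charpoly A.mulVecLin := by
  rw [← LinearMap.charpoly_toMatrix A.mulVecLin (Pi.basisFun K q)]
  congr 1
  ext i j
  simp [LinearMap.toMatrix_apply, Matrix.mulVecLin_apply, Matrix.mulVec, dotProduct,
    Pi.basisFun_apply, Pi.single_apply]

lemma charpoly_dvd_of_intertwine {K : Type*} [Field K] {m p : Type*} [Fintype m] [Fintype p]
    [DecidableEq m] [DecidableEq p] (M : Matrix m m K) (N : Matrix p p K) (B : Matrix m p K)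
    (hcomm : M * B = B * N) (hinj : Function.Injective B.mulVecLin) :
    N.charpoly ∣ M.charpoly := by
  let f := M.mulVecLin
  let bl := B.mulVecLin
  let W := LinearMap.range bl
  have hW : ∀ x ∈ W, f x ∈ W := by
    rintro x ⟨y, rfl⟩
    refine ⟨N.mulVecLin y, ?_⟩
    show B.mulVec (N.mulVec y) = M.mulVec (B.mulVec y)
    rw [Matrix.mulVec_mulVec, Matrix.mulVec_mulVec, hcomm]
  let e : (p → K) ≃ₗ[K] W := LinearEquiv.ofInjective bl hinj
  have key : e.conj N.mulVecLin = f.restrict hW := by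
    apply LinearMap.ext
    intro w
    obtain ⟨y, rfl⟩ := e.surjective w
    apply Subtype.ext
    rw [LinearEquiv.conj_apply]
    simp only [LinearMap.coe_comp, Function.comp_apply, LinearEquiv.coe_coe,
      LinearEquiv.symm_apply_apply]
    show ((e (N.mulVecLin y)) : m → K) = f ((e y : m → K))
    have h1 : ∀ z, ((e z) : m → K) = bl z := fun z => rfl
    rw [h1, h1]
    show B.mulVec (N.mulVec y) = M.mulVec (B.mulVec y)
    rw [Matrix.mulVec_mulVec, Matrix.mulVec_mulVec, hcomm]
  have hN : N.charpoly = LinearMap.charpoly N.mulVecLin := charpoly_eq_charpoly_mulVecLin N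
  have hM : M.charpoly = LinearMap.charpoly f := charpoly_eq_charpoly_mulVecLin M
  rw [hN, hM, ← e.charpoly_conj N.mulVecLin, key]
  exact charpoly_restrict_dvd f W hW

open scoped Classical in
/-- The available "token moves" from a set `S`: pairs `(a,b)` with `a ∈ S`, `b ∉ S`,
`a ~ b` in `G`. -/
def mvs {n : ℕ} (G : SimpleGraph (Fin n)) (S : Finset (Fin n)) : Finset (Fin n × Fin n) :=
  Finset.univ.filter (fun p => p.1 ∈ S ∧ p.2 ∉ S ∧ G.Adj p.1 p.2)

/-- Move a token
from `p.1` to `p.2`. -/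
def mv {n : ℕ} (S : Finset (Fin n)) (p : Fin n × Fin n) : Finset (Fin n) :=
  insert p.2 (S.erase p.1)

variable {n : ℕ} {G : SimpleGraph (Fin n)} {S : Finset (Fin n)} {p q : Fin n × Fin n}

lemma mem_mvs : p ∈ mvs G S ↔ p.1 ∈ S ∧ p.2 ∉ S ∧ G.Adj p.1 p.2 := by
  classical
  simp [mvs]

lemma mv_card (hp : p ∈ mvs G S) : (mv S p).card = S.card := by
  obtain ⟨h1, h2, h3⟩ := mem_mvs.1 hp
  rw [mv, Finset.card_insert_of_notMem (fun hc => h2 (Finset.erase_subset _ _ hc)),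
    Finset.card_erase_of_mem h1]
  have : 1 ≤ S.card := Finset.card_pos.2 ⟨p.1, h1⟩
  omega

lemma mem_mv_self (hp : p ∈ mvs G S) : p.2 ∈ mv S p := Finset.mem_insert_self _ _

lemma fst_not_mem_mv (hp : p ∈ mvs G S) : p.1 ∉ mv S p := by
  obtain ⟨h1, h2, h3⟩ := mem_mvs.1 hp
  have hne : p.1 ≠ p.2 := fun h => h2 (h ▸ h1)
  simp [mv, hne, Finset.mem_erase]

lemma mv_sdiff₁ (hp : p ∈ mvs G S) : mv S p \ S = {p.2} := by
  obtain ⟨h1, h2, h3⟩ := mem_mvs.1 hp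
  ext x
  simp only [Finset.mem_sdiff, mv, Finset.mem_insert, Finset.mem_erase, Finset.mem_singleton]
  constructor
  · rintro ⟨hx1 | hx1, hx2⟩
    · exact hx1
    · exact absurd hx1.2 hx2
  · rintro rfl; exact ⟨Or.inl rfl, h2⟩

lemma mv_sdiff₂ (hp : p ∈ mvs G S) : S \ mv S p = {p.1} := by
  obtain ⟨h1, h2, h3⟩ := mem_mvs.1 hp
  have hne : p.1 ≠ p.2 := fun h => h2 (h ▸ h1)
  ext x
  simp only [Finset.mem_sdiff, mv, Finset.mem_insert, Finset.mem_erase, Finset.mem_singleton]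
  constructor
  · rintro ⟨hx1, hx2⟩
    push_neg at hx2
    by_contra hne2
    exact (hx2.2 hne2) hx1
  · rintro rfl
    exact ⟨h1, by simp [hne]⟩

lemma mv_inj (hp : p ∈ mvs G S) (hq : q ∈ mvs G S) (h : mv S p = mv S q) : p = q := by
  have h1 : ({p.2} : Finset (Fin n)) = {q.2} := by rw [← mv_sdiff₁ hp, ← mv_sdiff₁ hq, h]
  have h2 : ({p.1} : Finset (Fin n)) = {q.1} := by rw [← mv_sdiff₂ hp, ← mv_sdiff₂ hq, h]
  have := Finset.singleton_injective h1
  have := Finset.singleton_injective h2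
  exact Prod.ext ‹p.1 = q.1› ‹p.2 = q.2›

lemma tokenGraph_adj_iff {k : ℕ} {A B : {s : Finset (Fin n) // s.card = k}} :
    (tokenGraph G k).Adj A B ↔ ∃ p ∈ mvs G A.1, B.1 = mv A.1 p := by
  constructor
  · rintro ⟨a, b, hab, ha, hb, hd⟩
    have hmemd : ∀ x, x ∈ symmDiff A.1 B.1 ↔ x = a ∨ x = b := by
      intro x; rw [hd]; simp
    have hsd : ∀ x, x ∈ symmDiff A.1 B.1 ↔ (x ∈ A.1 ∧ x ∉ B.1) ∨ (x ∈ B.1 ∧ x ∉ A.1) := by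
      intro x
      rw [symmDiff_def]
      simp [Finset.mem_union, Finset.mem_sdiff, and_comm]
    have hanb : a ∉ B.1 := by
      intro hc
      have := (hsd a).1 ((hmemd a).2 (Or.inl rfl))
      tauto
    have hbna : b ∉ A.1 := by
      intro hc
      have := (hsd b).1 ((hmemd b).2 (Or.inr rfl))
      tauto
    have hne : a ≠ b := fun h => hanb (h ▸ hb)
    refine ⟨(a, b), mem_mvs.2 ⟨ha, hbna, hab⟩, ?_⟩
    ext x
    simp only [mv, Finset.mem_insert, Finset.mem_erase]
    constructor
    · intro hxB
      by_cases hxb : x = b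
      · exact Or.inl hxb
      · right
        constructor
        · intro hxa
          exact hanb (hxa ▸ hxB)
        · by_contra hxA
          have := (hmemd x).1 ((hsd x).2 (Or.inr ⟨hxB, hxA⟩))
          rcases this with rfl | rfl
          · exact hanb hxB
          · exact hxb rfl
    · rintro (rfl | ⟨hxa, hxA⟩)
      · exact hb
      · by_contra hxB
        have := (hmemd x).1 ((hsd x).2 (Or.inl ⟨hxA, hxB⟩))
        rcases this with rfl | rfl
        · exact hxa rfl
        · exact hbna hxA
  · rintro ⟨p, hp, hB⟩
    obtain ⟨h1, h2, h3⟩ := mem_mvs.1 hp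
    refine ⟨p.1, p.2, h3, h1, hB ▸ mem_mv_self hp, ?_⟩
    rw [symmDiff_def]
    have e1 : A.1 \ B.1 = {p.1} := by rw [hB]; exact mv_sdiff₂ hp
    have e2 : B.1 \ A.1 = {p.2} := by rw [hB]; exact mv_sdiff₁ hp
    rw [Finset.sup_eq_union, e1, e2]
    ext x; simp [or_comm]

/-- The `k`-subset obtained by a move (with junk value if the move is invalid). -/
def mvSub {k : ℕ} (A : {s : Finset (Fin n) // s.card = k}) (p : Fin n × Fin n) :
    {s : Finset (Fin n) // s.card = k} :=
  if h : (mv A.1 p).card = k then ⟨mv A.1 p, h⟩ else A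

lemma mvSub_coe {k : ℕ} {A : {s : Finset (Fin n) // s.card = k}} (hp : p ∈ mvs G A.1) :
    (mvSub A p).1 = mv A.1 p := by
  rw [mvSub, dif_pos (by rw [mv_card hp]; exact A.2)]

lemma sum_tokenAdj {k : ℕ} [DecidableRel (tokenGraph G k).Adj]
    (f : {s : Finset (Fin n) // s.card = k} → ℝ) (A : {s : Finset (Fin n) // s.card = k}) :
    (∑ B, if (tokenGraph G k).Adj A B then f B else 0) = ∑ p ∈ mvs G A.1, f (mvSub A p) := by
  classical
  rw [← Finset.sum_filter]
  have himg : Finset.univ.filter (fun B => (tokenGraph G k).Adj A B)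
      = (mvs G A.1).image (mvSub A) := by
    ext B
    simp only [Finset.mem_filter, Finset.mem_univ, true_and, Finset.mem_image]
    rw [tokenGraph_adj_iff]
    constructor
    · rintro ⟨p, hp, hB⟩
      exact ⟨p, hp, Subtype.ext (by rw [mvSub_coe hp, ← hB])⟩
    · rintro ⟨p, hp, rfl⟩
      exact ⟨p, hp, mvSub_coe hp⟩
  rw [himg, Finset.sum_image]
  intro p hp q hq hpq
  exact mv_inj hp hq (by rw [← mvSub_coe hp, ← mvSub_coe hq, hpq])

lemma degree_tokenGraph {k : ℕ} [DecidableRel (tokenGraph G k).Adj]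
    (A : {s : Finset (Fin n) // s.card = k}) :
    ((tokenGraph G k).degree A : ℝ) = ((mvs G A.1).card : ℝ) := by
  classical
  have : ((tokenGraph G k).degree A : ℝ) = ∑ B, if (tokenGraph G k).Adj A B then (1:ℝ) else 0 := by
    rw [Finset.sum_boole]
    norm_num [SimpleGraph.degree, SimpleGraph.neighborFinset_eq_filter]
  rw [this, sum_tokenAdj (fun _ => (1:ℝ)) A, Finset.sum_const, nsmul_eq_mul, mul_one]

/-- The key counting identity behind commutation with the inclusion matrix. -/
lemma key_identity (G : SimpleGraph (Fin n)) (A X : Finset (Fin n)) :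
    (if X ⊆ A then ((mvs G A).card : ℝ) else 0)
      - ∑ p ∈ mvs G A, (if X ⊆ mv A p then (1:ℝ) else 0)
    = (if X ⊆ A then ((mvs G X).card : ℝ) else 0)
      - ∑ q ∈ mvs G X, (if mv X q ⊆ A then (1:ℝ) else 0) := by
  classical
  by_cases hXA : X ⊆ A
  · rw [if_pos hXA, if_pos hXA]
    rw [Finset.sum_boole, Finset.sum_boole]
    have hsplit₁ := Finset.card_filter_add_card_filter_not
      (s := mvs G A) (p := fun p => X ⊆ mv A p)
    have hsplit₂ := Finset.card_filter_add_card_filter_not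
      (s := mvs G X) (p := fun q => mv X q ⊆ A)
    have hfil : (mvs G A).filter (fun p => ¬ X ⊆ mv A p)
        = (mvs G X).filter (fun q => ¬ mv X q ⊆ A) := by
      ext p
      simp only [Finset.mem_filter, mem_mvs]
      constructor
      · rintro ⟨⟨h1, h2, h3⟩, h4⟩
        have hp1X : p.1 ∈ X := by
          by_contra hc
          refine h4 (fun x hx => ?_)
          rcases eq_or_ne x p.1 with rfl | hne
          · exact absurd hx hc
          · exact Finset.mem_insert_of_mem (Finset.mem_erase.2 ⟨hne, hXA hx⟩)
        refine ⟨⟨hp1X, fun hc => h2 (hXA hc), h3⟩, fun hc => h2 (hc (Finset.mem_insert_self _ _))⟩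
      · rintro ⟨⟨g1, g2, g3⟩, g4⟩
        have hp2A : p.2 ∉ A := by
          intro hc
          refine g4 (fun x hx => ?_)
          rcases Finset.mem_insert.1 hx with rfl | hx
          · exact hc
          · exact hXA (Finset.erase_subset _ _ hx)
        have hpm : p ∈ mvs G A := mem_mvs.2 ⟨hXA g1, hp2A, g3⟩
        exact ⟨⟨hXA g1, hp2A, g3⟩, fun hc => fst_not_mem_mv hpm (hc g1)⟩
    rw [hfil] at hsplit₁
    rw [← hsplit₁, ← hsplit₂]
    push_cast
    ring
  · rw [if_neg hXA, if_neg hXA]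
    rw [Finset.sum_boole, Finset.sum_boole]
    congr 1
    norm_cast
    refine Finset.card_bij' (fun p _ => p.swap) (fun q _ => q.swap) ?_ ?_
      (fun p _ => Prod.swap_swap p) (fun q _ => Prod.swap_swap q)
    · rintro p hp
      rw [Finset.mem_filter, mem_mvs] at hp
      obtain ⟨⟨h1, h2, h3⟩, h4⟩ := hp
      have hp2X : p.2 ∈ X := by
        by_contra hc
        refine hXA (fun x hx => ?_)
        rcases Finset.mem_insert.1 (h4 hx) with rfl | hx'
        · exact absurd hx hc
        · exact Finset.erase_subset _ _ hx'
      have hp1X : p.1 ∉ X := by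
        intro hc
        have := h4 hc
        rcases Finset.mem_insert.1 this with heq | hx'
        · exact h2 (heq ▸ h1)
        · exact (Finset.mem_erase.1 hx').1 rfl
      rw [Finset.mem_filter, mem_mvs]
      refine ⟨⟨hp2X, hp1X, h3.symm⟩, fun x hx => ?_⟩
      rcases Finset.mem_insert.1 hx with rfl | hx'
      · exact h1
      · obtain ⟨hxne, hxX⟩ := Finset.mem_erase.1 hx'
        rcases Finset.mem_insert.1 (h4 hxX) with rfl | hx''
        · exact absurd rfl hxne
        · exact Finset.erase_subset _ _ hx''
    · rintro q hq
      rw [Finset.mem_filter, mem_mvs] at hq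
      obtain ⟨⟨g1, g2, g3⟩, g4⟩ := hq
      have hq2A : q.2 ∈ A := g4 (Finset.mem_insert_self _ _)
      have hq1A : q.1 ∉ A := by
        intro hc
        refine hXA (fun x hx => ?_)
        rcases eq_or_ne x q.1 with rfl | hne
        · exact hc
        · exact g4 (Finset.mem_insert_of_mem (Finset.mem_erase.2 ⟨hne, hx⟩))
      rw [Finset.mem_filter, mem_mvs]
      refine ⟨⟨hq2A, hq1A, g3.symm⟩, fun x hx => ?_⟩
      rcases eq_or_ne x q.1 with rfl | hne
      · exact Finset.mem_insert_self _ _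
      · have hxA : x ∈ A := g4 (Finset.mem_insert_of_mem (Finset.mem_erase.2 ⟨hne, hx⟩))
        have hxq2 : x ≠ q.2 := fun h => g2 (h ▸ hx)
        exact Finset.mem_insert_of_mem (Finset.mem_erase.2 ⟨hxq2, hxA⟩)

lemma lapMat_apply' {V : Type*} [Fintype V] [DecidableEq V] (G' : SimpleGraph V)
    [DecidableRel G'.Adj] (i j : V) :
    lapMat G' i j = (if i = j then (G'.degree i : ℝ) else 0) - (if G'.Adj i j then 1 else 0) := by
  have heq : lapMat G' = G'.lapMatrix ℝ := by
    rw [lapMat]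
    congr!
  rw [heq, SimpleGraph.lapMatrix, Matrix.sub_apply, SimpleGraph.degMatrix,
    Matrix.diagonal_apply, SimpleGraph.adjMatrix_apply]

theorem lap_comm (G : SimpleGraph (Fin n)) (h k : ℕ) :
    lapMat (tokenGraph G k) * inclMatrix (Fin n) h k
      = inclMatrix (Fin n) h k * lapMat (tokenGraph G h) := by
  classical
  ext A X
  rw [Matrix.mul_apply, Matrix.mul_apply]
  have hL : ∑ B, lapMat (tokenGraph G k) A B * inclMatrix (Fin n) h k B X
      = (if X.1 ⊆ A.1 then ((mvs G A.1).card : ℝ) else 0)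
        - ∑ p ∈ mvs G A.1, (if X.1 ⊆ mv A.1 p then (1:ℝ) else 0) := by
    have : ∀ B, lapMat (tokenGraph G k) A B * inclMatrix (Fin n) h k B X
        = (if A = B then ((tokenGraph G k).degree A : ℝ) * (if X.1 ⊆ B.1 then 1 else 0) else 0)
          - (if (tokenGraph G k).Adj A B then (if X.1 ⊆ B.1 then (1:ℝ) else 0) else 0) := by
      intro B
      rw [lapMat_apply', inclMatrix, sub_mul]
      congr 1
      · split_ifs <;> ring
      · split_ifs with hab <;> simp
    rw [Finset.sum_congr rfl (fun B _ => this B), Finset.sum_sub_distrib,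
      Finset.sum_ite_eq Finset.univ A
        (fun B => ((tokenGraph G k).degree A : ℝ) * (if X.1 ⊆ B.1 then 1 else 0)),
      if_pos (Finset.mem_univ A), sum_tokenAdj (fun B => if X.1 ⊆ B.1 then (1:ℝ) else 0) A]
    congr 1
    · rw [degree_tokenGraph A, mul_ite, mul_one, mul_zero]
    · refine Finset.sum_congr rfl (fun p hp => ?_)
      rw [mvSub_coe hp]
  have hR : ∑ Y, inclMatrix (Fin n) h k A Y * lapMat (tokenGraph G h) Y X
      = (if X.1 ⊆ A.1 then ((mvs G X.1).card : ℝ) else 0)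
        - ∑ q ∈ mvs G X.1, (if mv X.1 q ⊆ A.1 then (1:ℝ) else 0) := by
    have : ∀ Y, inclMatrix (Fin n) h k A Y * lapMat (tokenGraph G h) Y X
        = (if Y = X then (if Y.1 ⊆ A.1 then (1:ℝ) else 0) * ((tokenGraph G h).degree Y : ℝ) else 0)
          - (if (tokenGraph G h).Adj X Y then (if Y.1 ⊆ A.1 then (1:ℝ) else 0) else 0) := by
      intro Y
      rw [lapMat_apply', inclMatrix, mul_sub]
      congr 1
      · split_ifs <;> ring
      · rw [SimpleGraph.adj_comm]
        split_ifs with hab <;> simp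
    rw [Finset.sum_congr rfl (fun Y _ => this Y), Finset.sum_sub_distrib,
      Finset.sum_ite_eq' Finset.univ X
        (fun Y => (if Y.1 ⊆ A.1 then (1:ℝ) else 0) * ((tokenGraph G h).degree Y : ℝ)),
      if_pos (Finset.mem_univ X), sum_tokenAdj (fun Y => if Y.1 ⊆ A.1 then (1:ℝ) else 0) X]
    congr 1
    · rw [degree_tokenGraph X, ite_mul, one_mul, zero_mul]
    · refine Finset.sum_congr rfl (fun q hq => ?_)
      rw [mvSub_coe hq]
  rw [hL, hR]
  exact key_identity G A.1 X.1

lemma incl_entry_mul {h k : ℕ} (A : {s : Finset (Fin n) // s.card = k})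
    (X : {s : Finset (Fin n) // s.card = h}) :
    inclMatrix (Fin n) h k A X = if X.1 ⊆ A.1 then (1:ℝ) else 0 := rfl

lemma incl_mul_incl (h k : ℕ) :
    inclMatrix (Fin n) k (k+1) * inclMatrix (Fin n) h k
      = ((k+1-h : ℕ) : ℝ) • inclMatrix (Fin n) h (k+1) := by
  classical
  ext A X
  rw [Matrix.mul_apply, Matrix.smul_apply]
  have hterm : ∀ C : {s : Finset (Fin n) // s.card = k},
      inclMatrix (Fin n) k (k+1) A C * inclMatrix (Fin n) h k C X
        = if X.1 ⊆ C.1 ∧ C.1 ⊆ A.1 then (1:ℝ) else 0 := by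
    intro C
    by_cases h1 : C.1 ⊆ A.1 <;> by_cases h2 : X.1 ⊆ C.1 <;>
      simp [inclMatrix, h1, h2]
  rw [Finset.sum_congr rfl (fun C _ => hterm C), Finset.sum_boole]
  by_cases hXA : X.1 ⊆ A.1
  · rw [incl_entry_mul, if_pos hXA, smul_eq_mul, mul_one]
    norm_cast
    have hcard : (A.1 \ X.1).card = k + 1 - h := by
      rw [Finset.card_sdiff_of_subset hXA, A.2, X.2]
    rw [← hcard]
    refine (Finset.card_bij
      (fun c hc => (⟨A.1.erase c, by
        rw [Finset.card_erase_of_mem (Finset.mem_sdiff.1 hc).1, A.2]; omega⟩ :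
          {s : Finset (Fin n) // s.card = k})) ?_ ?_ ?_).symm
    · intro c hc
      obtain ⟨hcA, hcX⟩ := Finset.mem_sdiff.1 hc
      simp only [Finset.mem_filter, Finset.mem_univ, true_and]
      exact ⟨fun x hx => Finset.mem_erase.2 ⟨fun he => hcX (he ▸ hx), hXA hx⟩,
        Finset.erase_subset _ _⟩
    · intro c hc c' hc' hcc
      have : A.1.erase c = A.1.erase c' := congrArg Subtype.val hcc
      by_contra hne
      exact (Finset.mem_erase.1 (this ▸ Finset.mem_erase.2
        ⟨Ne.symm hne, (Finset.mem_sdiff.1 hc').1⟩ : c' ∈ A.1.erase c')).1 rfl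
    · intro C hC
      obtain ⟨hXC, hCA⟩ := (Finset.mem_filter.1 hC).2
      have hone : (A.1 \ C.1).card = 1 := by
        rw [Finset.card_sdiff_of_subset hCA, A.2, C.2]
        omega
      obtain ⟨c, hc⟩ := Finset.card_eq_one.1 hone
      have hcA : c ∈ A.1 \ C.1 := hc ▸ Finset.mem_singleton_self c
      obtain ⟨hcA', hcC⟩ := Finset.mem_sdiff.1 hcA
      refine ⟨c, Finset.mem_sdiff.2 ⟨hcA', fun hcX => hcC (hXC hcX)⟩, ?_⟩
      apply Subtype.ext
      show A.1.erase c = C.1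
      have hsub : C.1 ⊆ A.1.erase c :=
        fun x hx => Finset.mem_erase.2 ⟨fun he => hcC (he ▸ hx), hCA hx⟩
      refine (Finset.eq_of_subset_of_card_le hsub ?_).symm
      rw [Finset.card_erase_of_mem hcA', A.2, C.2]
      omega
  · rw [incl_entry_mul, if_neg hXA, smul_eq_mul, mul_zero]
    norm_cast
    rw [Finset.card_eq_zero, Finset.filter_eq_empty_iff]
    rintro C -
    rintro ⟨hXC, hCA⟩
    exact hXA (hXC.trans hCA)

lemma transpose_incl_mul_incl (j : ℕ) (hj : 1 ≤ j) :
    (inclMatrix (Fin n) j (j+1))ᵀ * inclMatrix (Fin n) j (j+1)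
      = inclMatrix (Fin n) (j-1) j * (inclMatrix (Fin n) (j-1) j)ᵀ
        + ((n : ℝ) - 2*j) • 1 := by
  classical
  ext X Y
  rw [Matrix.add_apply, Matrix.mul_apply, Matrix.mul_apply, Matrix.smul_apply,
    Matrix.one_apply]
  have hterm1 : ∀ A : {s : Finset (Fin n) // s.card = j+1},
      (inclMatrix (Fin n) j (j+1))ᵀ X A * inclMatrix (Fin n) j (j+1) A Y
        = if X.1 ∪ Y.1 ⊆ A.1 then (1:ℝ) else 0 := by
    intro A
    rw [Matrix.transpose_apply]
    by_cases h1 : X.1 ⊆ A.1 <;> by_cases h2 : Y.1 ⊆ A.1 <;>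
      simp [inclMatrix, h1, h2, Finset.union_subset_iff]
  have hterm2 : ∀ W : {s : Finset (Fin n) // s.card = j-1},
      inclMatrix (Fin n) (j-1) j X W * (inclMatrix (Fin n) (j-1) j)ᵀ W Y
        = if W.1 ⊆ X.1 ∩ Y.1 then (1:ℝ) else 0 := by
    intro W
    rw [Matrix.transpose_apply]
    by_cases h1 : W.1 ⊆ X.1 <;> by_cases h2 : W.1 ⊆ Y.1 <;>
      simp [inclMatrix, h1, h2, Finset.subset_inter_iff]
  rw [Finset.sum_congr rfl (fun A _ => hterm1 A), Finset.sum_congr rfl (fun W _ => hterm2 W),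
    Finset.sum_boole, Finset.sum_boole]
  have hjn : j ≤ n := by
    have := Finset.card_le_univ X.1
    rw [X.2] at this
    simpa using this
  by_cases hXY : X = Y
  · subst hXY
    rw [if_pos rfl, smul_eq_mul, mul_one]
    have hc1 : (Finset.univ.filter
        (fun A : {s : Finset (Fin n) // s.card = j+1} => X.1 ∪ X.1 ⊆ A.1)).card
        = n - j := by
      have : (X.1ᶜ).card = n - j := by
        rw [Finset.card_compl, X.2, Fintype.card_fin]
      rw [← this]
      refine (Finset.card_bij
        (fun v hv => (⟨insert v X.1, by
          rw [Finset.card_insert_of_notMem (Finset.mem_compl.1 hv), X.2]⟩ :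
            {s : Finset (Fin n) // s.card = j+1})) ?_ ?_ ?_).symm
      · intro v hv
        simp only [Finset.mem_filter, Finset.mem_univ, true_and, Finset.union_self]
        exact (Finset.subset_insert _ _)
      · intro v hv w hw hvw
        have heq : insert v X.1 = insert w X.1 := congrArg Subtype.val hvw
        have hvmem : v ∈ insert w X.1 := heq ▸ Finset.mem_insert_self v X.1
        rcases Finset.mem_insert.1 hvmem with h | h
        · exact h
        · exact absurd h (Finset.mem_compl.1 hv)
      · intro A hA
        have hXA : X.1 ⊆ A.1 := by
          have := (Finset.mem_filter.1 hA).2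
          rwa [Finset.union_self] at this
        have hone : (A.1 \ X.1).card = 1 := by
          rw [Finset.card_sdiff_of_subset hXA, A.2, X.2]; omega
        obtain ⟨v, hv⟩ := Finset.card_eq_one.1 hone
        have hvm : v ∈ A.1 \ X.1 := by rw [hv]; exact Finset.mem_singleton_self v
        obtain ⟨hvA, hvX⟩ := Finset.mem_sdiff.1 hvm
        refine ⟨v, Finset.mem_compl.2 hvX, ?_⟩
        apply Subtype.ext
        show insert v X.1 = A.1
        apply Finset.eq_of_subset_of_card_le
        · exact Finset.insert_subset hvA hXA
        · rw [Finset.card_insert_of_notMem hvX, A.2, X.2]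
    have hc2 : (Finset.univ.filter
        (fun W : {s : Finset (Fin n) // s.card = j-1} => W.1 ⊆ X.1 ∩ X.1)).card = j := by
      refine Eq.trans ?_ X.2
      refine (Finset.card_bij
        (fun x hx => (⟨X.1.erase x, by
          rw [Finset.card_erase_of_mem hx, X.2]⟩ :
            {s : Finset (Fin n) // s.card = j-1})) ?_ ?_ ?_).symm
      · intro x hx
        simp only [Finset.mem_filter, Finset.mem_univ, true_and, Finset.inter_self]
        exact Finset.erase_subset _ _
      · intro x hx y hy hxy
        have heq : X.1.erase x = X.1.erase y := congrArg Subtype.val hxy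
        by_contra hne
        exact (Finset.mem_erase.1 (heq ▸ Finset.mem_erase.2 ⟨Ne.symm hne, hy⟩ :
          y ∈ X.1.erase y)).1 rfl
      · intro W hW
        have hWX : W.1 ⊆ X.1 := by
          have := (Finset.mem_filter.1 hW).2
          rwa [Finset.inter_self] at this
        have hone : (X.1 \ W.1).card = 1 := by
          rw [Finset.card_sdiff_of_subset hWX, X.2, W.2]; omega
        obtain ⟨x, hx⟩ := Finset.card_eq_one.1 hone
        have hxm : x ∈ X.1 \ W.1 := hx ▸ Finset.mem_singleton_self x
        obtain ⟨hxX, hxW⟩ := Finset.mem_sdiff.1 hxm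
        refine ⟨x, hxX, ?_⟩
        apply Subtype.ext
        show X.1.erase x = W.1
        have hsub : W.1 ⊆ X.1.erase x :=
          fun z hz => Finset.mem_erase.2 ⟨fun he => hxW (he ▸ hz), hWX hz⟩
        refine (Finset.eq_of_subset_of_card_le hsub ?_).symm
        rw [Finset.card_erase_of_mem hxX, X.2, W.2]
    rw [hc1, hc2]
    have : ((n - j : ℕ) : ℝ) = (n : ℝ) - j := by
      push_cast [hjn]; ring
    rw [this]
    ring
  · rw [if_neg hXY, smul_eq_mul, mul_zero, add_zero]
    norm_cast
    have hXY1 : X.1 ≠ Y.1 := fun h => hXY (Subtype.ext h)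
    have hcu : j ≤ (X.1 ∪ Y.1).card := by
      have := Finset.card_le_card (Finset.subset_union_left : X.1 ⊆ X.1 ∪ Y.1)
      rwa [X.2] at this
    have hune : (X.1 ∪ Y.1).card ≠ j := by
      intro h
      have h1 : X.1 = X.1 ∪ Y.1 :=
        Finset.eq_of_subset_of_card_le Finset.subset_union_left (by rw [h, X.2])
      have h2 : Y.1 = X.1 ∪ Y.1 :=
        Finset.eq_of_subset_of_card_le Finset.subset_union_right (by rw [h, Y.2])
      exact hXY1 (h1.trans h2.symm)
    have hsum : (X.1 ∪ Y.1).card + (X.1 ∩ Y.1).card = j + j := by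
      rw [Finset.card_union_add_card_inter, X.2, Y.2]
    rcases eq_or_lt_of_le (show j + 1 ≤ (X.1 ∪ Y.1).card by omega) with hu | hu
    · -- |X ∪ Y| = j + 1 : both sides equal 1
      have hfil1 : Finset.univ.filter
          (fun A : {s : Finset (Fin n) // s.card = j+1} => X.1 ∪ Y.1 ⊆ A.1)
          = {⟨X.1 ∪ Y.1, hu.symm⟩} := by
        ext A
        simp only [Finset.mem_filter, Finset.mem_univ, true_and, Finset.mem_singleton]
        constructor
        · intro hsub
          exact Subtype.ext ((Finset.eq_of_subset_of_card_le hsub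
            (by rw [A.2]; exact hu.le)).symm)
        · rintro rfl
          exact Finset.Subset.refl _
      have hfil2 : Finset.univ.filter
          (fun W : {s : Finset (Fin n) // s.card = j-1} => W.1 ⊆ X.1 ∩ Y.1)
          = {⟨X.1 ∩ Y.1, by omega⟩} := by
        ext W
        simp only [Finset.mem_filter, Finset.mem_univ, true_and, Finset.mem_singleton]
        constructor
        · intro hsub
          refine Subtype.ext (Finset.eq_of_subset_of_card_le hsub ?_)
          show (X.1 ∩ Y.1).card ≤ W.1.card
          rw [W.2]; omega
        · rintro rfl
          exact Finset.Subset.refl _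
      rw [hfil1, hfil2, Finset.card_singleton, Finset.card_singleton]
    · -- |X ∪ Y| > j + 1 : both sides equal 0
      have hfil1 : Finset.univ.filter
          (fun A : {s : Finset (Fin n) // s.card = j+1} => X.1 ∪ Y.1 ⊆ A.1)
          = ∅ := by
        rw [Finset.filter_eq_empty_iff]
        rintro A -
        intro hsub
        have := Finset.card_le_card hsub
        rw [A.2] at this
        omega
      have hfil2 : Finset.univ.filter
          (fun W : {s : Finset (Fin n) // s.card = j-1} => W.1 ⊆ X.1 ∩ Y.1)
          = ∅ := by
        rw [Finset.filter_eq_empty_iff]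
        rintro W -
        intro hsub
        have := Finset.card_le_card hsub
        rw [W.2] at this
        omega
      rw [hfil1, hfil2]
      rfl

set_option maxHeartbeats 1000000 in
lemma step_mulVec_inj (j : ℕ) (hj1 : 1 ≤ j) (hjn : 2*j < n)
    (x : {s : Finset (Fin n) // s.card = j} → ℝ)
    (hx : (inclMatrix (Fin n) j (j+1)).mulVec x = 0) : x = 0 := by
  classical
  by_contra hne
  set U := inclMatrix (Fin n) j (j+1) with hU
  set W := inclMatrix (Fin n) (j-1) j with hW
  have h1 : x ⬝ᵥ ((Uᵀ * U).mulVec x) = (U.mulVec x) ⬝ᵥ (U.mulVec x) := by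
    rw [← Matrix.mulVec_mulVec, Matrix.dotProduct_mulVec, Matrix.vecMul_transpose]
  have h2 : x ⬝ᵥ ((W * Wᵀ).mulVec x) = (Wᵀ.mulVec x) ⬝ᵥ (Wᵀ.mulVec x) := by
    rw [← Matrix.mulVec_mulVec, Matrix.dotProduct_mulVec, ← Matrix.mulVec_transpose]
  have hkey : x ⬝ᵥ ((Uᵀ * U).mulVec x)
      = (Wᵀ.mulVec x) ⬝ᵥ (Wᵀ.mulVec x) + ((n : ℝ) - 2*j) * (x ⬝ᵥ x) := by
    rw [transpose_incl_mul_incl j hj1, Matrix.add_mulVec, dotProduct_add, h2,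
      Matrix.smul_mulVec, Matrix.one_mulVec, dotProduct_smul, smul_eq_mul]
  have hq : (0:ℝ) = (Wᵀ.mulVec x) ⬝ᵥ (Wᵀ.mulVec x) + ((n : ℝ) - 2*j) * (x ⬝ᵥ x) := by
    rw [← hkey, h1, hx]
    simp
  have ha : (0:ℝ) ≤ (Wᵀ.mulVec x) ⬝ᵥ (Wᵀ.mulVec x) :=
    Finset.sum_nonneg fun i _ => mul_self_nonneg _
  have hs : (0:ℝ) < x ⬝ᵥ x := by
    rcases lt_or_eq_of_le (Finset.sum_nonneg fun i (_ : i ∈ Finset.univ) =>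
      mul_self_nonneg (x i)) with h | h
    · exact h
    · exact absurd ((dotProduct_self_eq_zero).1 h.symm) hne
  have hc : (0:ℝ) < (n : ℝ) - 2*j := by
    have : (2*j : ℝ) < n := by exact_mod_cast hjn
    linarith
  nlinarith

lemma incl_mulVec_inj (h : ℕ) (hh : 1 ≤ h) : ∀ (k : ℕ), h ≤ k → 2*k ≤ n →
    ∀ x : {s : Finset (Fin n) // s.card = h} → ℝ,
      (inclMatrix (Fin n) h k).mulVec x = 0 → x = 0 := by
  refine Nat.le_induction ?_ ?_
  · intro _ x hx
    have hone : inclMatrix (Fin n) h h = (1 : Matrix _ _ ℝ) := by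
      ext A X
      rw [incl_entry_mul, Matrix.one_apply]
      by_cases hsub : X.1 ⊆ A.1
      · rw [if_pos hsub, if_pos]
        exact Subtype.ext ((Finset.eq_of_subset_of_card_le hsub (by rw [A.2, X.2])).symm)
      · rw [if_neg hsub, if_neg]
        intro heq
        exact hsub (heq ▸ Finset.Subset.refl _)
    rw [hone, Matrix.one_mulVec] at hx
    exact hx
  · intro k hk IH h2k x hx
    have h2 : (inclMatrix (Fin n) k (k+1)).mulVec ((inclMatrix (Fin n) h k).mulVec x) = 0 := by
      have hne : ((k+1-h : ℕ) : ℝ) ≠ 0 := by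
        have : 1 ≤ k + 1 - h := by omega
        positivity
      have : (inclMatrix (Fin n) k (k+1) * inclMatrix (Fin n) h k).mulVec x
          = ((k+1-h : ℕ) : ℝ) • ((inclMatrix (Fin n) h (k+1)).mulVec x) := by
        rw [incl_mul_incl, Matrix.smul_mulVec]
      rw [Matrix.mulVec_mulVec, this, hx, smul_zero]
    have hker := step_mulVec_inj k (le_trans hh hk) (by omega) _ h2
    exact IH (by omega) x hker

end AuxTokenLap

noncomputable section

theorem stmt_2 {n h k : ℕ} (G : SimpleGraph (Fin n)) (h1 : 1 ≤ h) (hhk : h < k)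
    (hk : k ≤ n / 2) :
    (lapMat (tokenGraph G h)).charpoly ∣ (lapMat (tokenGraph G k)).charpoly := by
  have h2k : 2 * k ≤ n := by
    have := (Nat.le_div_iff_mul_le (by norm_num : 0 < 2)).1 hk
    omega
  have hinj : Function.Injective (inclMatrix (Fin n) h k).mulVecLin := by
    rw [← LinearMap.ker_eq_bot, LinearMap.ker_eq_bot']
    intro x hx0
    exact incl_mulVec_inj h h1 k hhk.le h2k x hx0
  exact charpoly_dvd_of_intertwine _ _ _ (lap_comm G h k) hinj

end
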